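/- Let X be a right A-Galois object. If ψ¹ and ψ² are two nonzero invariant functionals on X, then there exists a scalar c ∈ k such that ψ¹ = c·ψ². -/

import Mathlib

open TensorProduct

noncomputable section

variable (k : Type*) [Field k]

/-- Apply a linear functional to the second tensor factor. -/
def applySnd {M N : Type*} [AddCommGroup M] [Module k M]
    [AddCommGroup N] [Module k N] (f : N →ₗ[k] k) : M ⊗[k] N →ₗ[k] M :=
  (TensorProduct.rid k M).toLinearMap ∘ₗ LinearMap.lTensor M f

/-- Apply a linear functional to the first tensor factor. -/
def applyFst {M N : Type*} [AddCommGroup M] [Module k M]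
    [AddCommGroup N] [Module k N] (f : M →ₗ[k] k) : M ⊗[k] N →ₗ[k] N :=
  (TensorProduct.lid k N).toLinearMap ∘ₗ LinearMap.rTensor N f

variable (A X : Type*) [Ring A] [HopfAlgebra k A] [Ring X] [Algebra k X]

/-- The Galois map `V : X ⊗ X → X ⊗ A`, `x ⊗ y ↦ (x ⊗ 1) * α y`. -/
def galoisV (α : X →ₐ[k] X ⊗[k] A) : X ⊗[k] X →ₗ[k] X ⊗[k] A :=
  LinearMap.mul' k (X ⊗[k] A) ∘ₗ
    TensorProduct.map ((TensorProduct.mk k X A).flip 1) α.toLinearMap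

/-- A Hopf algebra with bijective antipode and faithful left integral `φ`,
together with a right Galois coaction `α` on `X` with trivial coinvariants. -/
structure GaloisContext where
  φ : A →ₗ[k] k
  φ_ne : φ ≠ 0
  φ_integral : ∀ a : A, applySnd k φ (Coalgebra.comul a) = φ a • (1 : A)
  φ_faithful_left : ∀ a : A, (∀ b : A, φ (a * b) = 0) → a = 0
  φ_faithful_right : ∀ a : A, (∀ b : A, φ (b * a) = 0) → a = 0
  antipode_bijective : Function.Bijective (HopfAlgebra.antipode (R := k) (A := A))
  α : X →ₐ[k] X ⊗[k] A
  coassoc : ∀ x : X,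
    TensorProduct.assoc k X A A ((LinearMap.rTensor A α.toLinearMap) (α x))
      = LinearMap.lTensor X (Coalgebra.comul (R := k) (A := A)) (α x)
  counit_id : ∀ x : X,
    applySnd k (Coalgebra.counit (R := k) (A := A)) (α x) = x
  coinv_trivial : ∀ x : X, α x = x ⊗ₜ[k] (1 : A) → ∃ c : k, x = c • (1 : X)
  galois : Function.Bijective (galoisV k A X α)

variable {k A X}

/-- The Galois map as a linear equivalence. -/
def GaloisContext.V (G : GaloisContext k A X) : (X ⊗[k] X) ≃ₗ[k] (X ⊗[k] A) :=
  LinearEquiv.ofBijective (galoisV k A X G.α) G.galois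

/-- The map `β : A → X ⊗ X`, `a ↦ V⁻¹(1 ⊗ a)`. -/
def GaloisContext.β (G : GaloisContext k A X) : A →ₗ[k] X ⊗[k] X :=
  G.V.symm.toLinearMap ∘ₗ TensorProduct.mk k X A 1

end

/-! ### Generic helper lemmas -/

noncomputable section Helpers

open TensorProduct LinearMap

variable {k : Type*} [Field k]
variable {M N P Q : Type*} [AddCommGroup M] [Module k M] [AddCommGroup N] [Module k N]
  [AddCommGroup P] [Module k P] [AddCommGroup Q] [Module k Q]

@[simp] lemma applySnd_tmul (f : N →ₗ[k] k) (m : M) (n : N) :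
    applySnd k f (m ⊗ₜ[k] n) = f n • m := by
  simp [applySnd]

@[simp] lemma applyFst_tmul (f : M →ₗ[k] k) (m : M) (n : N) :
    applyFst k f (m ⊗ₜ[k] n) = f m • n := by
  simp [applyFst]

lemma applySnd_rTensor (f : N →ₗ[k] k) (g : M →ₗ[k] P) (t : M ⊗[k] N) :
    applySnd k f (g.rTensor N t) = g (applySnd k f t) := by
  induction t using TensorProduct.induction_on with
  | zero => simp
  | tmul m n => simp
  | add u v hu hv => simp [hu, hv]

lemma applyFst_lTensor (f : M →ₗ[k] k) (g : N →ₗ[k] P) (t : M ⊗[k] N) :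
    applyFst k f (g.lTensor M t) = g (applyFst k f t) := by
  induction t using TensorProduct.induction_on with
  | zero => simp
  | tmul m n => simp
  | add u v hu hv => simp [hu, hv]

lemma applyFst_applySnd_swap (f : M →ₗ[k] k) (ℓ : N →ₗ[k] k) (t : M ⊗[k] N) :
    ℓ (applyFst k f t) = f (applySnd k ℓ t) := by
  induction t using TensorProduct.induction_on with
  | zero => simp
  | tmul m n => simp [mul_comm]
  | add u v hu hv => simp [hu, hv]

lemma applyFst_comm (f : N →ₗ[k] k) (t : M ⊗[k] N) :
    applyFst k f ((TensorProduct.comm k M N) t) = applySnd k f t := by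
  induction t using TensorProduct.induction_on with
  | zero => simp
  | tmul m n => simp
  | add u v hu hv =>
      rw [LinearEquiv.map_add, LinearMap.map_add, LinearMap.map_add, hu, hv]

lemma applyFst_map (f : P →ₗ[k] k) (g : M →ₗ[k] P) (h : N →ₗ[k] Q) (t : M ⊗[k] N) :
    applyFst k f ((TensorProduct.map g h) t) = h (applyFst k (f ∘ₗ g) t) := by
  induction t using TensorProduct.induction_on with
  | zero => simp
  | tmul m n => simp
  | add u v hu hv => simp [hu, hv]

lemma lTensor_smulRight (f : N →ₗ[k] k) (x : P) (t : M ⊗[k] N) :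
    (f.smulRight x).lTensor M t = (applySnd k f t) ⊗ₜ[k] x := by
  induction t using TensorProduct.induction_on with
  | zero => simp
  | tmul m n =>
      rw [LinearMap.lTensor_tmul, LinearMap.smulRight_apply, applySnd_tmul,
        tmul_smul, smul_tmul']
  | add u v hu hv => simp [hu, hv, add_tmul]

lemma map_smulRight_id (f : M →ₗ[k] k) (x : P) (t : M ⊗[k] N) :
    (TensorProduct.map (f.smulRight x) LinearMap.id) t = x ⊗ₜ[k] (applyFst k f t) := by
  induction t using TensorProduct.induction_on with
  | zero => simp
  | tmul m n =>
      rw [TensorProduct.map_tmul, LinearMap.smulRight_apply, LinearMap.id_coe, id_eq,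
        applyFst_tmul, smul_tmul]
  | add u v hu hv => simp [hu, hv, tmul_add]

lemma assoc_symm_tmul' (x : M) (w : N ⊗[k] P) :
    (TensorProduct.assoc k M N P).symm (x ⊗ₜ w)
      = LinearMap.rTensor P (TensorProduct.mk k M N x) w := by
  induction w using TensorProduct.induction_on with
  | zero => rw [tmul_zero, LinearEquiv.map_zero, LinearMap.map_zero]
  | tmul u v => rfl
  | add u v hu hv => rw [tmul_add, LinearEquiv.map_add, LinearMap.map_add, hu, hv]

lemma assoc_tmul' (w : M ⊗[k] N) (p : P) :
    (TensorProduct.assoc k M N P) (w ⊗ₜ p)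
      = LinearMap.lTensor M ((TensorProduct.mk k N P).flip p) w := by
  induction w using TensorProduct.induction_on with
  | zero => rw [zero_tmul, LinearEquiv.map_zero, LinearMap.map_zero]
  | tmul u v => rfl
  | add u v hu hv => rw [add_tmul, LinearEquiv.map_add, LinearMap.map_add, hu, hv]

lemma applySnd_assoc_symm (f : P →ₗ[k] k) (u : M ⊗[k] (N ⊗[k] P)) :
    applySnd k f ((TensorProduct.assoc k M N P).symm u)
      = LinearMap.lTensor M (applySnd k f) u := by
  induction u using TensorProduct.induction_on with
  | zero => simp
  | tmul m w =>
      rw [assoc_symm_tmul']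
      induction w using TensorProduct.induction_on with
      | zero => simp
      | tmul n p => simp
      | add s t hs ht => simp_all [tmul_add]
  | add u v hu hv =>
      rw [LinearEquiv.map_add, LinearMap.map_add, LinearMap.map_add, hu, hv]

lemma rTensor_applySnd_assoc_symm (f : N →ₗ[k] k) (u : M ⊗[k] (N ⊗[k] P)) :
    (applySnd k f (M := M)).rTensor P ((TensorProduct.assoc k M N P).symm u)
      = LinearMap.lTensor M (applyFst k f) u := by
  induction u using TensorProduct.induction_on with
  | zero => simp
  | tmul m w =>
      rw [assoc_symm_tmul']
      induction w using TensorProduct.induction_on with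
      | zero => simp
      | tmul n p =>
          rw [LinearMap.rTensor_tmul, TensorProduct.mk_apply, LinearMap.rTensor_tmul,
            LinearMap.lTensor_tmul, applySnd_tmul, applyFst_tmul, smul_tmul]
      | add s t hs ht => simp_all [tmul_add]
  | add u v hu hv =>
      rw [LinearEquiv.map_add, LinearMap.map_add, LinearMap.map_add, hu, hv]

/-- If all contractions of the second factor by linear functionals vanish, the tensor is zero. -/
lemma applySnd_all_zero {t : M ⊗[k] N} (h : ∀ ℓ : N →ₗ[k] k, applySnd k ℓ t = 0) :
    t = 0 := by
  classical
  let b := Module.Basis.ofVectorSpace k N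
  let e := (LinearEquiv.lTensor M b.repr) ≪≫ₗ
    TensorProduct.finsuppScalarRight k k M (Module.Basis.ofVectorSpaceIndex k N)
  have he : ∀ (t : M ⊗[k] N) (i : Module.Basis.ofVectorSpaceIndex k N),
      e t i = applySnd k ((Finsupp.lapply i) ∘ₗ (b.repr : N →ₗ[k] _)) t := by
    intro t
    induction t using TensorProduct.induction_on with
    | zero => intro i; simp [e]
    | tmul m n =>
        intro i
        simp only [e, LinearEquiv.trans_apply, LinearEquiv.lTensor_tmul,
          TensorProduct.finsuppScalarRight_apply_tmul_apply, applySnd_tmul,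
          LinearMap.comp_apply, LinearEquiv.coe_coe, Finsupp.lapply_apply]
    | add u v hu hv =>
        intro i
        rw [LinearEquiv.map_add, Finsupp.add_apply, hu, hv, LinearMap.map_add]
  have h0 : e t = 0 := by
    ext i
    rw [he t i, h]
    rfl
  have := e.injective (by simpa using h0)
  simpa using this

lemma smul_zero_cases {c : k} {x : M} (h : c • x = 0) : c = 0 ∨ x = 0 := by
  by_cases hc : c = 0
  · exact Or.inl hc
  · right
    have : x = c⁻¹ • (c • x) := by rw [smul_smul, inv_mul_cancel₀ hc, one_smul]
    rw [this, h, smul_zero]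

end Helpers

/-! ### Hopf algebra lemmas -/

noncomputable section HopfLemmas

open TensorProduct LinearMap Coalgebra

variable {k : Type*} [Field k] {A : Type*} [Ring A] [HopfAlgebra k A]

local notation "S" => HopfAlgebra.antipode (R := k) (A := A)
local notation "Δ" => Coalgebra.comul (R := k) (A := A)
local notation "ε" => Coalgebra.counit (R := k) (A := A)

lemma applySnd_counit_comul (a : A) : applySnd k ε (Δ a) = a := by
  rw [applySnd, LinearMap.comp_apply, Coalgebra.lTensor_counit_comul]
  simp

lemma applyFst_counit_comul (a : A) : applyFst k ε (Δ a) = a := by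
  rw [applyFst, LinearMap.comp_apply, Coalgebra.rTensor_counit_comul]
  simp

/-- The auxiliary map `x ⊗ t ↦ (S x ⊗ 1) * t`. -/
def psiMap : A ⊗[k] (A ⊗[k] A) →ₗ[k] A ⊗[k] A :=
  LinearMap.mul' k (A ⊗[k] A) ∘ₗ
    TensorProduct.map (((TensorProduct.mk k A A).flip 1) ∘ₗ S) LinearMap.id

lemma psiMap_tmul (x : A) (t : A ⊗[k] A) :
    psiMap (x ⊗ₜ t) = ((S x) ⊗ₜ (1:A)) * t := by
  rw [psiMap, LinearMap.comp_apply, TensorProduct.map_tmul, LinearMap.mul'_apply]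
  rfl

lemma t_identity_pf (a : A) :
    psiMap ((Δ).lTensor A (Δ a)) = (1:A) ⊗ₜ[k] a := by
  have hassoc : (Δ).lTensor A (Δ a)
      = TensorProduct.assoc k A A A ((Δ).rTensor A (Δ a)) :=
    (Coalgebra.coassoc_apply a).symm
  have hPsiAssoc : (psiMap (k := k) (A := A)) ∘ₗ (TensorProduct.assoc k A A A).toLinearMap
      = (LinearMap.mul' k A ∘ₗ (S).rTensor A).rTensor A := by
    apply TensorProduct.ext_threefold
    intro x y z
    simp only [LinearMap.comp_apply, LinearEquiv.coe_coe, TensorProduct.assoc_tmul,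
      LinearMap.rTensor_tmul, LinearMap.mul'_apply]
    rw [psiMap_tmul, Algebra.TensorProduct.tmul_mul_tmul, one_mul]
  have h1 := LinearMap.congr_fun hPsiAssoc ((Δ).rTensor A (Δ a))
  simp only [LinearMap.comp_apply, LinearEquiv.coe_coe] at h1
  rw [hassoc, h1, ← LinearMap.comp_apply, ← LinearMap.rTensor_comp, LinearMap.comp_assoc]
  rw [HopfAlgebra.mul_antipode_rTensor_comul]
  rw [LinearMap.rTensor_comp, LinearMap.comp_apply, Coalgebra.rTensor_counit_comul]
  simp

lemma t_identity_sum (a : A) {ι : Type*} (ra : Coalgebra.Repr k a ι) :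
    ∑ j ∈ ra.index, ((S (ra.left j)) ⊗ₜ[k] (1:A)) * (Δ (ra.right j)) = (1:A) ⊗ₜ[k] a := by
  have := t_identity_pf (k := k) a
  rw [← ra.eq, map_sum, map_sum] at this
  simp only [LinearMap.lTensor_tmul, psiMap_tmul] at this
  exact this

lemma applySnd_one_tmul_mul {B C : Type*} [Ring B] [Algebra k B] [Ring C] [Algebra k C]
    (f : C →ₗ[k] k) (x : B) (t : B ⊗[k] C) :
    applySnd k f ((x ⊗ₜ[k] (1:C)) * t) = x * applySnd k f t := by
  induction t using TensorProduct.induction_on with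
  | zero => simp
  | tmul p q =>
      rw [Algebra.TensorProduct.tmul_mul_tmul, one_mul, applySnd_tmul, applySnd_tmul,
        mul_smul_comm]
  | add u v hu hv => simp [mul_add, hu, hv]

lemma applySnd_mulLeft (f : A →ₗ[k] k) (a : A) (t : A ⊗[k] A) :
    applySnd k (f ∘ₗ LinearMap.mulLeft k a) t = applySnd k f (((1:A) ⊗ₜ[k] a) * t) := by
  induction t using TensorProduct.induction_on with
  | zero => simp
  | tmul p q =>
      rw [Algebra.TensorProduct.tmul_mul_tmul, one_mul, applySnd_tmul, applySnd_tmul]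
      rfl
  | add u v hu hv => simp [mul_add, hu, hv]

/-- Strong invariance for a left integral `φ`:
`∑ b₍₁₎ φ(a b₍₂₎) = ∑ S(a₍₁₎) φ(a₍₂₎ b)`. -/
lemma strong_invariance (φ : A →ₗ[k] k)
    (hφ : ∀ a : A, applySnd k φ (Δ a) = φ a • (1 : A)) (a b : A) :
    applySnd k (φ ∘ₗ LinearMap.mulLeft k a) (Δ b)
      = S (applySnd k (φ ∘ₗ LinearMap.mulRight k b) (Δ a)) := by
  obtain ⟨ra⟩ : Nonempty (Coalgebra.Repr k a (A × A)) := ⟨ℛ k a⟩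
  have hRHS : S (applySnd k (φ ∘ₗ LinearMap.mulRight k b) (Δ a))
      = ∑ j ∈ ra.index, φ (ra.right j * b) • S (ra.left j) := by
    rw [← ra.eq, map_sum, map_sum]
    simp only [applySnd_tmul, LinearMap.comp_apply, LinearMap.mulRight_apply, map_smul]
  have hLHS : applySnd k (φ ∘ₗ LinearMap.mulLeft k a) (Δ b)
      = ∑ j ∈ ra.index, φ (ra.right j * b) • S (ra.left j) := by
    rw [applySnd_mulLeft, ← t_identity_sum a ra, Finset.sum_mul, map_sum]
    have : ∀ j ∈ ra.index,
        applySnd k φ ((((S (ra.left j)) ⊗ₜ[k] (1:A)) * (Δ (ra.right j))) * (Δ b))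
          = φ (ra.right j * b) • S (ra.left j) := by
      intro j _
      rw [mul_assoc, ← Bialgebra.comul_mul, applySnd_one_tmul_mul, hφ, mul_smul_comm, mul_one]
    exact Finset.sum_congr rfl this
  rw [hLHS, hRHS]

end HopfLemmas

/-! ### The antipode is an anti-coalgebra map -/

noncomputable section AntipodeComul

open TensorProduct LinearMap Coalgebra

variable {k : Type*} [Field k] {A : Type*} [Ring A] [HopfAlgebra k A]

local notation "S" => HopfAlgebra.antipode (R := k) (A := A)
local notation "Δ" => Coalgebra.comul (R := k) (A := A)
local notation "ε" => Coalgebra.counit (R := k) (A := A)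

/-- Convolution product on maps `A → A ⊗ A`. -/
def conv (f g : A →ₗ[k] A ⊗[k] A) : A →ₗ[k] A ⊗[k] A :=
  LinearMap.mul' k (A ⊗[k] A) ∘ₗ TensorProduct.map f g ∘ₗ Δ

lemma conv_apply_repr (f g : A →ₗ[k] A ⊗[k] A) {a : A} {ι : Type*} (ra : Coalgebra.Repr k a ι) :
    conv f g a = ∑ j ∈ ra.index, f (ra.left j) * g (ra.right j) := by
  rw [conv, LinearMap.comp_apply, LinearMap.comp_apply, ← ra.eq, map_sum, map_sum]
  simp only [TensorProduct.map_tmul, LinearMap.mul'_apply]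

/-- The convolution unit. -/
def convUnit : A →ₗ[k] A ⊗[k] A := (Algebra.linearMap k (A ⊗[k] A)) ∘ₗ ε

lemma conv_unit_right (f : A →ₗ[k] A ⊗[k] A) : conv f convUnit = f := by
  ext a
  obtain ⟨ra⟩ : Nonempty (Coalgebra.Repr k a (A × A)) := ⟨ℛ k a⟩
  rw [conv_apply_repr f convUnit ra]
  have : ∀ j ∈ ra.index, f (ra.left j) * convUnit (ra.right j)
      = ε (ra.right j) • f (ra.left j) := by
    intro j _
    rw [convUnit, LinearMap.comp_apply, Algebra.linearMap_apply, ← Algebra.commutes,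
      ← Algebra.smul_def]
  have hsum : ∑ x ∈ ra.index, ε (ra.right x) • ra.left x = a := by
    have := applySnd_counit_comul (k := k) a
    rw [← ra.eq, map_sum] at this
    simpa using this
  rw [Finset.sum_congr rfl this]
  calc ∑ x ∈ ra.index, ε (ra.right x) • f (ra.left x)
      = f (∑ x ∈ ra.index, ε (ra.right x) • ra.left x) := by
        rw [map_sum]; simp only [map_smul]
    _ = f a := by rw [hsum]

lemma conv_unit_left (f : A →ₗ[k] A ⊗[k] A) : conv convUnit f = f := by
  ext a
  obtain ⟨ra⟩ : Nonempty (Coalgebra.Repr k a (A × A)) := ⟨ℛ k a⟩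
  rw [conv_apply_repr convUnit f ra]
  have : ∀ j ∈ ra.index, convUnit (ra.left j) * f (ra.right j)
      = ε (ra.left j) • f (ra.right j) := by
    intro j _
    rw [convUnit, LinearMap.comp_apply, Algebra.linearMap_apply, ← Algebra.smul_def]
  have hsum : ∑ x ∈ ra.index, ε (ra.left x) • ra.right x = a := by
    have := applyFst_counit_comul (k := k) a
    rw [← ra.eq, map_sum] at this
    simpa using this
  rw [Finset.sum_congr rfl this]
  calc ∑ x ∈ ra.index, ε (ra.left x) • f (ra.right x)
      = f (∑ x ∈ ra.index, ε (ra.left x) • ra.right x) := by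
        rw [map_sum]; simp only [map_smul]
    _ = f a := by rw [hsum]

lemma conv_assoc (f g h : A →ₗ[k] A ⊗[k] A) :
    conv (conv f g) h = conv f (conv g h) := by
  ext a
  obtain ⟨ra⟩ : Nonempty (Coalgebra.Repr k a (A × A)) := ⟨ℛ k a⟩
  set ll : (i : ra.ι) → Coalgebra.Repr k (ra.left i) (A × A) := fun i => ℛ k (ra.left i) with hll
  set rr : (i : ra.ι) → Coalgebra.Repr k (ra.right i) (A × A) := fun i => ℛ k (ra.right i) with hrr
  have base := Coalgebra.sum_tmul_tmul_eq ra ll rr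
  -- apply the trilinear contraction x ⊗ (y ⊗ z) ↦ f x * (g y * h z)
  let L : A ⊗[k] (A ⊗[k] A) →ₗ[k] A ⊗[k] A :=
    LinearMap.mul' k (A ⊗[k] A) ∘ₗ
      TensorProduct.map f (LinearMap.mul' k (A ⊗[k] A) ∘ₗ TensorProduct.map g h)
  have happ := congrArg L base
  rw [map_sum, map_sum] at happ
  simp only [map_sum, L, LinearMap.comp_apply, TensorProduct.map_tmul,
    LinearMap.mul'_apply] at happ
  calc conv (conv f g) h a
      = ∑ i ∈ ra.index, conv f g (ra.left i) * h (ra.right i) := conv_apply_repr _ h ra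
    _ = ∑ i ∈ ra.index, ∑ j ∈ (ll i).index,
          f ((ll i).left j) * ((g ((ll i).right j)) * h (ra.right i)) := by
        apply Finset.sum_congr rfl
        intro i _
        rw [conv_apply_repr f g (ll i), Finset.sum_mul]
        exact Finset.sum_congr rfl fun j _ => mul_assoc _ _ _
    _ = ∑ i ∈ ra.index, ∑ j ∈ (rr i).index,
          f (ra.left i) * (g ((rr i).left j) * h ((rr i).right j)) := happ
    _ = conv f (conv g h) a := by
        rw [conv_apply_repr f (conv g h) ra]
        apply Finset.sum_congr rfl
        intro i _
        rw [conv_apply_repr g h (rr i), Finset.mul_sum]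

/-- `Δ ∘ S`. -/
def T₁ : A →ₗ[k] A ⊗[k] A := Δ ∘ₗ S

/-- `(S ⊗ S) ∘ flip ∘ Δ`. -/
def T₂ : A →ₗ[k] A ⊗[k] A :=
  TensorProduct.map S S ∘ₗ (TensorProduct.comm k A A).toLinearMap ∘ₗ Δ

lemma conv_comul_T₁ : conv Δ T₁ = convUnit (k := k) (A := A) := by
  ext a
  obtain ⟨ra⟩ : Nonempty (Coalgebra.Repr k a (A × A)) := ⟨ℛ k a⟩
  rw [conv_apply_repr _ _ ra]
  have : ∀ j ∈ ra.index, (Δ (ra.left j)) * T₁ (ra.right j)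
      = Δ (ra.left j * S (ra.right j)) := by
    intro j _
    rw [T₁, LinearMap.comp_apply, Bialgebra.comul_mul]
  rw [Finset.sum_congr rfl this, ← map_sum, HopfAlgebra.sum_mul_antipode_eq_algebraMap_counit ra,
    Bialgebra.comul_algebraMap]
  rfl

lemma conv_T₂_comul : conv T₂ Δ = convUnit (k := k) (A := A) := by
  ext a
  obtain ⟨ra⟩ : Nonempty (Coalgebra.Repr k a (A × A)) := ⟨ℛ k a⟩
  set ll : (i : ra.ι) → Coalgebra.Repr k (ra.left i) (A × A) := fun i => ℛ k (ra.left i) with hll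
  set rr : (i : ra.ι) → Coalgebra.Repr k (ra.right i) (A × A) := fun i => ℛ k (ra.right i) with hrr
  have base := Coalgebra.sum_tmul_tmul_eq ra ll rr
  let L : A ⊗[k] (A ⊗[k] A) →ₗ[k] A ⊗[k] A :=
    LinearMap.mul' k (A ⊗[k] A) ∘ₗ
      TensorProduct.map
        (TensorProduct.map S S ∘ₗ (TensorProduct.comm k A A).toLinearMap) Δ ∘ₗ
      (TensorProduct.assoc k A A A).symm.toLinearMap
  have happ := congrArg L base
  rw [map_sum, map_sum] at happ
  simp only [map_sum, L, LinearMap.comp_apply, LinearEquiv.coe_coe,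
    TensorProduct.assoc_symm_tmul, TensorProduct.map_tmul, TensorProduct.comm_tmul,
    LinearMap.mul'_apply] at happ
  have hT2 : conv T₂ Δ a = ∑ i ∈ ra.index, ∑ j ∈ (ll i).index,
      ((S ((ll i).right j)) ⊗ₜ[k] (S ((ll i).left j))) * Δ (ra.right i) := by
    rw [conv_apply_repr _ _ ra]
    apply Finset.sum_congr rfl
    intro i _
    rw [T₂, LinearMap.comp_apply, LinearMap.comp_apply, ← (ll i).eq, map_sum, map_sum,
      Finset.sum_mul]
    simp only [LinearEquiv.coe_coe, TensorProduct.comm_tmul, TensorProduct.map_tmul]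
  rw [hT2, happ]
  have : ∀ i ∈ ra.index, ∑ j ∈ (rr i).index,
      ((S ((rr i).left j)) ⊗ₜ[k] (S (ra.left i))) * Δ ((rr i).right j)
      = (1:A) ⊗ₜ[k] (S (ra.left i) * ra.right i) := by
    intro i _
    have hfactor : ∀ j ∈ (rr i).index,
        ((S ((rr i).left j)) ⊗ₜ[k] (S (ra.left i))) * Δ ((rr i).right j)
        = ((1:A) ⊗ₜ[k] (S (ra.left i))) *
            ((((S ((rr i).left j)) ⊗ₜ[k] (1:A))) * Δ ((rr i).right j)) := by
      intro j _
      rw [← mul_assoc, Algebra.TensorProduct.tmul_mul_tmul, one_mul, mul_one]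
    rw [Finset.sum_congr rfl hfactor, ← Finset.mul_sum, t_identity_sum (ra.right i) (rr i),
      Algebra.TensorProduct.tmul_mul_tmul, one_mul]
  rw [Finset.sum_congr rfl this, ← TensorProduct.tmul_sum, HopfAlgebra.sum_antipode_mul_eq_algebraMap_counit ra]
  rw [convUnit, LinearMap.comp_apply, Algebra.linearMap_apply,
    Algebra.TensorProduct.algebraMap_apply, Algebra.algebraMap_eq_smul_one, smul_tmul]

lemma T₁_eq_T₂ : T₁ (k := k) (A := A) = T₂ := by
  have h1 : conv (conv T₂ Δ) T₁ = T₁ := by rw [conv_T₂_comul, conv_unit_left]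
  have h2 : conv T₂ (conv Δ T₁) = T₂ := by rw [conv_comul_T₁, conv_unit_right]
  rw [← h1, conv_assoc, h2]

/-- The antipode is an anti-coalgebra morphism. -/
lemma comul_antipode (a : A) :
    Δ (S a) = TensorProduct.map S S ((TensorProduct.comm k A A) (Δ a)) :=
  LinearMap.congr_fun (T₁_eq_T₂ (k := k) (A := A)) a

end AntipodeComul

/-! ### Galois object lemmas -/

noncomputable section GaloisLemmas

open TensorProduct LinearMap Coalgebra

variable {k : Type*} [Field k] {A X : Type*} [Ring A] [HopfAlgebra k A]
  [Ring X] [Algebra k X] (G : GaloisContext k A X)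

local notation "S" => HopfAlgebra.antipode (R := k) (A := A)
local notation "Δ" => Coalgebra.comul (R := k) (A := A)
local notation "ε" => Coalgebra.counit (R := k) (A := A)
local notation "Vl" => galoisV k A X G.α

lemma galoisV_tmul (x y : X) : Vl (x ⊗ₜ[k] y) = (x ⊗ₜ[k] (1:A)) * G.α y := by
  rw [galoisV, LinearMap.comp_apply, TensorProduct.map_tmul, LinearMap.mul'_apply]
  rfl

lemma V_apply (u : X ⊗[k] X) : G.V u = Vl u := rfl

lemma Vl_one_tmul (y : X) : Vl ((1:X) ⊗ₜ[k] y) = G.α y := by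
  rw [galoisV_tmul, ← Algebra.TensorProduct.one_def, one_mul]

lemma Vl_left_mul (x : X) (u : X ⊗[k] X) :
    Vl ((x ⊗ₜ[k] (1:X)) * u) = (x ⊗ₜ[k] (1:A)) * Vl u := by
  induction u using TensorProduct.induction_on with
  | zero => simp
  | tmul p q =>
      rw [Algebra.TensorProduct.tmul_mul_tmul, one_mul, galoisV_tmul, galoisV_tmul,
        ← mul_assoc, Algebra.TensorProduct.tmul_mul_tmul, one_mul]
  | add u v hu hv => simp [mul_add, hu, hv]

lemma Vl_beta (a : A) : Vl (G.β a) = (1:X) ⊗ₜ[k] a := by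
  rw [GaloisContext.β, LinearMap.comp_apply]
  exact G.V.apply_symm_apply _

lemma Vsymm_alpha (y : X) : G.V.symm (G.α y) = (1:X) ⊗ₜ[k] y := by
  rw [← Vl_one_tmul, ← V_apply, LinearEquiv.symm_apply_apply]

/-- The inverse Galois map, explicitly: `x ⊗ a ↦ (x ⊗ 1) * β a`. -/
def GaloisContext.theta : X ⊗[k] A →ₗ[k] X ⊗[k] X :=
  LinearMap.mul' k (X ⊗[k] X) ∘ₗ
    TensorProduct.map ((TensorProduct.mk k X X).flip 1) G.β

lemma theta_tmul (x : X) (a : A) :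
    G.theta (x ⊗ₜ[k] a) = (x ⊗ₜ[k] (1:X)) * G.β a := by
  rw [GaloisContext.theta, LinearMap.comp_apply, TensorProduct.map_tmul,
    LinearMap.mul'_apply]
  rfl

lemma Vsymm_eq_theta (t : X ⊗[k] A) : G.V.symm t = G.theta t := by
  rw [LinearEquiv.symm_apply_eq]
  induction t using TensorProduct.induction_on with
  | zero => simp
  | tmul x a =>
      rw [theta_tmul, V_apply, Vl_left_mul, Vl_beta, Algebra.TensorProduct.tmul_mul_tmul,
        mul_one, one_mul]
  | add u v hu hv => rw [map_add, map_add, ← hu, ← hv]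

end GaloisLemmas

noncomputable section GaloisCoassoc

open TensorProduct LinearMap Coalgebra

variable {k : Type*} [Field k] {A X : Type*} [Ring A] [HopfAlgebra k A]
  [Ring X] [Algebra k X] (G : GaloisContext k A X)

local notation "S" => HopfAlgebra.antipode (R := k) (A := A)
local notation "Δ" => Coalgebra.comul (R := k) (A := A)
local notation "ε" => Coalgebra.counit (R := k) (A := A)
local notation "Vl" => galoisV k A X G.α

lemma lTensor_comul_one_mul (x : X) (w : X ⊗[k] A) :
    (Δ).lTensor X ((x ⊗ₜ[k] (1:A)) * w) = (x ⊗ₜ[k] (1 : A ⊗[k] A)) * ((Δ).lTensor X w) := by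
  induction w using TensorProduct.induction_on with
  | zero => simp
  | tmul p q =>
      rw [Algebra.TensorProduct.tmul_mul_tmul, one_mul, LinearMap.lTensor_tmul,
        LinearMap.lTensor_tmul, Algebra.TensorProduct.tmul_mul_tmul, one_mul]
  | add u v hu hv => simp [mul_add, hu, hv]

lemma SL0 (x : X) (v : A) (t : X ⊗[k] A) :
    ((TensorProduct.mk k A A).flip v).lTensor X ((x ⊗ₜ[k] (1:A)) * t)
      = (x ⊗ₜ[k] (1 : A ⊗[k] A)) * (((TensorProduct.mk k A A).flip v).lTensor X t) := by
  induction t using TensorProduct.induction_on with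
  | zero => simp
  | tmul p q =>
      rw [Algebra.TensorProduct.tmul_mul_tmul, one_mul, LinearMap.lTensor_tmul,
        LinearMap.lTensor_tmul, Algebra.TensorProduct.tmul_mul_tmul, one_mul]
      try rfl
  | add u v hu hv => simp [mul_add, hu, hv]

lemma SL1 (x : X) (w : X ⊗[k] A) :
    TensorProduct.assoc k X A A ((Vl ∘ₗ TensorProduct.mk k X X x).rTensor A w)
      = (x ⊗ₜ[k] (1 : A ⊗[k] A)) *
        (TensorProduct.assoc k X A A ((G.α.toLinearMap).rTensor A w)) := by
  induction w using TensorProduct.induction_on with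
  | zero => simp only [LinearMap.map_zero, LinearEquiv.map_zero, mul_zero]
  | tmul u v =>
      rw [LinearMap.rTensor_tmul, LinearMap.rTensor_tmul, LinearMap.comp_apply,
        TensorProduct.mk_apply, assoc_tmul', assoc_tmul', galoisV_tmul, SL0]
      try rfl
  | add u v hu hv =>
      rw [LinearMap.map_add, LinearEquiv.map_add, hu, hv, LinearMap.map_add,
        LinearEquiv.map_add, mul_add]

lemma star_identity (u : X ⊗[k] X) :
    (Δ).lTensor X (Vl u)
      = TensorProduct.assoc k X A A
          ((Vl).rTensor A ((TensorProduct.assoc k X X A).symm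
            ((G.α.toLinearMap).lTensor X u))) := by
  induction u using TensorProduct.induction_on with
  | zero =>
      simp only [LinearMap.map_zero, LinearEquiv.map_zero]
  | tmul x y =>
      have hc : (Vl).rTensor A ((TensorProduct.mk k X X x).rTensor A (G.α.toLinearMap y))
          = (Vl ∘ₗ TensorProduct.mk k X X x).rTensor A (G.α.toLinearMap y) := by
        rw [LinearMap.rTensor_comp]; rfl
      rw [LinearMap.lTensor_tmul, assoc_symm_tmul', hc, SL1, galoisV_tmul,
        lTensor_comul_one_mul]
      simp only [AlgHom.toLinearMap_apply]
      rw [G.coassoc y]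
  | add u v hu hv =>
      rw [LinearMap.map_add, LinearMap.map_add, hu, hv, LinearMap.map_add,
        LinearEquiv.map_add, LinearMap.map_add, LinearEquiv.map_add]

lemma S2fin (a : A) :
    (TensorProduct.assoc k X X A).symm ((G.α.toLinearMap).lTensor X (G.β a))
      = (G.β).rTensor A (Δ a) := by
  have hstar := star_identity G (G.β a)
  rw [Vl_beta, LinearMap.lTensor_tmul] at hstar
  have hcomp : Vl ∘ₗ G.β = TensorProduct.mk k X A 1 := by
    ext c
    rw [LinearMap.comp_apply, Vl_beta]
    rfl
  have hrhs : (Vl).rTensor A ((G.β).rTensor A (Δ a))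
      = (TensorProduct.mk k X A 1).rTensor A (Δ a) := by
    rw [← LinearMap.comp_apply, ← LinearMap.rTensor_comp, hcomp]
  have hlhs : (Vl).rTensor A ((TensorProduct.assoc k X X A).symm
      ((G.α.toLinearMap).lTensor X (G.β a)))
      = (TensorProduct.mk k X A 1).rTensor A (Δ a) := by
    have h2 := congrArg (TensorProduct.assoc k X A A).symm hstar
    rw [LinearEquiv.symm_apply_apply, assoc_symm_tmul'] at h2
    exact h2.symm
  -- injectivity of rTensor of the Galois equivalence
  let E := TensorProduct.congr G.V (LinearEquiv.refl k A)
  have hE : ∀ t : (X ⊗[k] X) ⊗[k] A, E t = (Vl).rTensor A t := by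
    intro t
    induction t using TensorProduct.induction_on with
    | zero => rw [LinearMap.map_zero, LinearEquiv.map_zero]
    | tmul p q => rw [TensorProduct.congr_tmul, LinearMap.rTensor_tmul]; rfl
    | add u v hu hv => rw [LinearMap.map_add, LinearEquiv.map_add, hu, hv]
  apply E.injective
  rw [hE, hE, hlhs, hrhs]

lemma gamma_inv (ψ : X →ₗ[k] k) (hψ : ∀ x : X, applyFst k ψ (G.α x) = ψ x • (1 : A))
    (a : A) :
    (applySnd k ψ ∘ₗ G.β).rTensor A (Δ a)
      = (applySnd k ψ (G.β a)) ⊗ₜ[k] (1:A) := by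
  have hfun : applyFst k ψ ∘ₗ G.α.toLinearMap = ψ.smulRight (1:A) := by
    ext x
    rw [LinearMap.comp_apply, LinearMap.smulRight_apply]
    exact hψ x
  rw [LinearMap.rTensor_comp, LinearMap.comp_apply, ← S2fin G a,
    rTensor_applySnd_assoc_symm, ← LinearMap.comp_apply, ← LinearMap.lTensor_comp,
    hfun, lTensor_smulRight]

end GaloisCoassoc

/-! ### Classification of vector-valued right integrals -/

noncomputable section Classification

open TensorProduct LinearMap Coalgebra

variable {k : Type*} [Field k]

lemma comm_rTensor_smulRight {M N P : Type*} [AddCommGroup M] [Module k M]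
    [AddCommGroup N] [Module k N] [AddCommGroup P] [Module k P]
    (f : M →ₗ[k] k) (x : P) (t : M ⊗[k] N) :
    (TensorProduct.comm k P N) ((f.smulRight x).rTensor N t)
      = (applyFst k f t) ⊗ₜ[k] x := by
  induction t using TensorProduct.induction_on with
  | zero => simp
  | tmul m n =>
      rw [LinearMap.rTensor_tmul, LinearMap.smulRight_apply, TensorProduct.comm_tmul,
        applyFst_tmul, tmul_smul, smul_tmul']
  | add u v hu hv => simp_all [add_tmul]

variable {A X : Type*} [Ring A] [HopfAlgebra k A]
  [Ring X] [Algebra k X] (G : GaloisContext k A X)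

local notation "S" => HopfAlgebra.antipode (R := k) (A := A)
local notation "Δ" => Coalgebra.comul (R := k) (A := A)
local notation "ε" => Coalgebra.counit (R := k) (A := A)

lemma classification (γ : A →ₗ[k] X)
    (hinv : ∀ a : A, γ.rTensor A (Δ a) = γ a ⊗ₜ[k] (1:A)) :
    ∃ x₀ : X, (∀ c : A, γ c = G.φ (S c) • x₀) ∧
      (x₀ ≠ 0 → ∃ g' : A, ∀ b : A, applyFst k G.φ (Δ b) = G.φ b • g') := by
  classical
  set SE : A ≃ₗ[k] A := LinearEquiv.ofBijective S G.antipode_bijective with hSE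
  have hSEapp : ∀ a : A, SE a = S a := fun _ => rfl
  -- the key identity
  have key : ∀ a b : A,
      G.φ b • γ a = γ (SE.symm (applySnd k (G.φ ∘ₗ LinearMap.mulLeft k a) (Δ b))) := by
    intro a b
    have t1 : γ (applySnd k (G.φ ∘ₗ LinearMap.mulRight k b) (Δ a)) = G.φ b • γ a := by
      have h := congrArg (applySnd k (G.φ ∘ₗ LinearMap.mulRight k b)) (hinv a)
      rw [applySnd_rTensor, applySnd_tmul] at h
      rw [h, LinearMap.comp_apply, LinearMap.mulRight_apply, one_mul]
    have t2 : SE.symm (applySnd k (G.φ ∘ₗ LinearMap.mulLeft k a) (Δ b))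
        = applySnd k (G.φ ∘ₗ LinearMap.mulRight k b) (Δ a) := by
      rw [strong_invariance G.φ G.φ_integral a b, ← hSEapp, LinearEquiv.symm_apply_apply]
    rw [t2, t1]
  -- normalize an element with φ b₀ = 1
  obtain ⟨b', hb'⟩ : ∃ b' : A, G.φ b' ≠ 0 := by
    by_contra hc
    push_neg at hc
    exact G.φ_ne (by ext b; simp [hc b])
  set b₀ : A := (G.φ b')⁻¹ • b' with hb₀def
  have hb₀ : G.φ b₀ = 1 := by
    rw [hb₀def, map_smul, smul_eq_mul, inv_mul_cancel₀ hb']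
  set γS : A →ₗ[k] X := γ ∘ₗ SE.symm.toLinearMap with hγSdef
  set W : A ⊗[k] X := (TensorProduct.comm k X A) ((γS).rTensor A (Δ b₀)) with hWdef
  have repW : ∀ a : A, γ a = applyFst k (G.φ ∘ₗ LinearMap.mulLeft k a) W := by
    intro a
    rw [hWdef, applyFst_comm, applySnd_rTensor]
    have : γS (applySnd k (G.φ ∘ₗ LinearMap.mulLeft k a) (Δ b₀))
        = G.φ b₀ • γ a := by
      rw [hγSdef]
      exact (key a b₀).symm
    rw [this, hb₀, one_smul]
  have F1X : ∀ b : A, G.φ b • W = (TensorProduct.comm k X A) ((γS).rTensor A (Δ b)) := by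
    intro b
    have hZ : ∀ a : A, applyFst k (G.φ ∘ₗ LinearMap.mulLeft k a)
        (G.φ b • W - (TensorProduct.comm k X A) ((γS).rTensor A (Δ b))) = 0 := by
      intro a
      rw [map_sub, map_smul, ← repW a, applyFst_comm, applySnd_rTensor]
      have : γS (applySnd k (G.φ ∘ₗ LinearMap.mulLeft k a) (Δ b)) = G.φ b • γ a := by
        rw [hγSdef]
        exact (key a b).symm
      rw [this, sub_self]
    have hz : G.φ b • W - (TensorProduct.comm k X A) ((γS).rTensor A (Δ b)) = 0 := by
      apply applySnd_all_zero
      intro ℓ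
      apply G.φ_faithful_right
      intro a
      have h2 := congrArg ℓ (hZ a)
      rw [map_zero, applyFst_applySnd_swap] at h2
      simpa using h2
    exact sub_eq_zero.mp hz
  have e1 : ∀ b : A, applyFst k ε ((TensorProduct.comm k X A) ((γS).rTensor A (Δ b)))
      = γ (SE.symm b) := by
    intro b
    rw [applyFst_comm, applySnd_rTensor, applySnd_counit_comul]
    simp [hγSdef]
  set x₀ : X := applyFst k ε W with hx₀def
  have class1 : ∀ c : A, γ c = G.φ (S c) • x₀ := by
    intro c
    have hb : ∀ b : A, γ (SE.symm b) = G.φ b • x₀ := by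
      intro b
      have h := congrArg (applyFst k ε) (F1X b)
      rw [map_smul, e1 b] at h
      exact h.symm
    have := hb (SE c)
    rwa [LinearEquiv.symm_apply_apply, hSEapp] at this
  refine ⟨x₀, class1, ?_⟩
  intro hx₀
  -- the map γ ∘ S⁻¹ is φ(·) • x₀
  have hγS2 : γS = G.φ.smulRight x₀ := by
    ext c
    rw [hγSdef, LinearMap.comp_apply, LinearMap.smulRight_apply, LinearEquiv.coe_coe]
    have := class1 (SE.symm c)
    rwa [← hSEapp, LinearEquiv.apply_symm_apply] at this
  have hF : ∀ b : A, G.φ b • W = (applyFst k G.φ (Δ b)) ⊗ₜ[k] x₀ := by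
    intro b
    rw [F1X b, hγS2, comm_rTensor_smulRight]
  -- a functional with ξ x₀ = 1
  obtain ⟨ξ, hξ⟩ : ∃ ξ : X →ₗ[k] k, ξ x₀ = 1 := by
    set B := Module.Basis.ofVectorSpace k X
    have hr : B.repr x₀ ≠ 0 := by
      intro hzero
      have := congrArg B.repr.symm hzero
      simp only [LinearEquiv.symm_apply_apply, map_zero] at this
      exact hx₀ this
    obtain ⟨i, hi⟩ : ∃ i, B.repr x₀ i ≠ 0 := by
      by_contra hall
      push_neg at hall
      exact hr (Finsupp.ext fun i => hall i)
    refine ⟨(B.repr x₀ i)⁻¹ • (Finsupp.lapply i ∘ₗ (B.repr : X →ₗ[k] _)), ?_⟩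
    simp [inv_mul_cancel₀ hi]
  refine ⟨applySnd k ξ W, fun b => ?_⟩
  have h := congrArg (applySnd k ξ) (hF b)
  rw [map_smul, applySnd_tmul, hξ, one_smul] at h
  exact h.symm

end Classification

/-! ### Final assembly -/

noncomputable section FinalLemmas

open TensorProduct LinearMap Coalgebra

variable {k : Type*} [Field k] {A X : Type*} [Ring A] [HopfAlgebra k A]
  [Ring X] [Algebra k X] (G : GaloisContext k A X)

local notation "Sl" => HopfAlgebra.antipode (R := k) (A := A)
local notation "Δ" => Coalgebra.comul (R := k) (A := A)
local notation "ε" => Coalgebra.counit (R := k) (A := A)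
local notation "Vl" => galoisV k A X G.α
local notation "ψ₀" => (G.φ ∘ₗ Sl : A →ₗ[k] k)

/-- The scalar identity: `ψ z • 1 = q z * x`. -/
lemma scalar_identity (ψ : X →ₗ[k] k) (x : X)
    (hγ : ∀ c : A, applySnd k ψ (G.β c) = G.φ (Sl c) • x) (z : X) :
    ψ z • (1 : X) = (applySnd k ψ₀ (G.α z)) * x := by
  have contract : ∀ t : X ⊗[k] A,
      applySnd k ψ (G.V.symm t) = (applySnd k ψ₀ t) * x := by
    intro t
    rw [Vsymm_eq_theta]
    induction t using TensorProduct.induction_on with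
    | zero => simp
    | tmul y a =>
        rw [theta_tmul, applySnd_one_tmul_mul, applySnd_tmul, hγ a,
          LinearMap.comp_apply, mul_smul_comm, smul_mul_assoc]
    | add u v hu hv => rw [map_add, map_add, map_add, hu, hv, add_mul]
  have h := contract (G.α z)
  rwa [Vsymm_alpha, applySnd_tmul] at h

/-- The coaction of a `q`-value. -/
lemma alpha_q (g : A) (hκ : ∀ a : A, applySnd k ψ₀ (Δ a) = (G.φ ∘ₗ Sl) a • g) (z : X) :
    G.α (applySnd k ψ₀ (G.α z)) = (applySnd k ψ₀ (G.α z)) ⊗ₜ[k] g := by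
  have hκmap : (applySnd k ψ₀ ∘ₗ Δ : A →ₗ[k] A) = (ψ₀ : A →ₗ[k] k).smulRight g := by
    ext a
    rw [LinearMap.comp_apply, LinearMap.smulRight_apply]
    exact hκ a
  have h1 : G.α.toLinearMap (applySnd k ψ₀ (G.α z))
      = applySnd k ψ₀ ((G.α.toLinearMap).rTensor A (G.α z)) :=
    (applySnd_rTensor _ _ _).symm
  have h2 : (G.α.toLinearMap).rTensor A (G.α z)
      = (TensorProduct.assoc k X A A).symm ((Δ).lTensor X (G.α z)) := by
    rw [LinearEquiv.eq_symm_apply]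
    exact G.coassoc z
  have h3 : applySnd k ψ₀ ((TensorProduct.assoc k X A A).symm ((Δ).lTensor X (G.α z)))
      = (applySnd k ψ₀ ∘ₗ Δ).lTensor X (G.α z) := by
    rw [applySnd_assoc_symm, ← LinearMap.comp_apply, ← LinearMap.lTensor_comp]
    try rfl
  have := h1.trans (by rw [h2, h3, hκmap, lTensor_smulRight])
  simpa using this

end FinalLemmas

noncomputable section FinalLemmas2

open TensorProduct LinearMap Coalgebra

variable {k : Type*} [Field k] {A X : Type*} [Ring A] [HopfAlgebra k A]
  [Ring X] [Algebra k X] (G : GaloisContext k A X)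

local notation "Sl" => HopfAlgebra.antipode (R := k) (A := A)
local notation "Δ" => Coalgebra.comul (R := k) (A := A)
local notation "ε" => Coalgebra.counit (R := k) (A := A)

lemma kappa_identity (g' : A) (hκ' : ∀ b : A, applyFst k G.φ (Δ b) = G.φ b • g') :
    ∀ a : A, applySnd k (G.φ ∘ₗ Sl) (Δ a)
      = (G.φ ∘ₗ Sl) a •
        ((LinearEquiv.ofBijective Sl G.antipode_bijective).symm g') := by
  intro a
  set SE : A ≃ₗ[k] A := LinearEquiv.ofBijective Sl G.antipode_bijective with hSEdef
  have hs : ∀ y : A, SE.symm (Sl y) = y := fun y => SE.symm_apply_apply y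
  have h1 : applyFst k G.φ (Δ (Sl a)) = Sl (applySnd k (G.φ ∘ₗ Sl) (Δ a)) := by
    rw [comul_antipode a, applyFst_map, applyFst_comm]
  have h2 : Sl (applySnd k (G.φ ∘ₗ Sl) (Δ a)) = G.φ (Sl a) • g' :=
    h1.symm.trans (hκ' (Sl a))
  have h3 := congrArg SE.symm h2
  rw [hs, map_smul] at h3
  exact h3

lemma grouplike (g : A)
    (hκ : ∀ a : A, applySnd k (G.φ ∘ₗ Sl) (Δ a) = (G.φ ∘ₗ Sl) a • g)
    (a₀ : A) (ha₀ : (G.φ ∘ₗ Sl) a₀ = 1) :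
    Δ g = g ⊗ₜ[k] g ∧ Sl g * g = 1 ∧ g * Sl g = 1 := by
  have hκmap : (applySnd k (G.φ ∘ₗ Sl) ∘ₗ Δ : A →ₗ[k] A)
      = (G.φ ∘ₗ Sl : A →ₗ[k] k).smulRight g := by
    ext a
    rw [LinearMap.comp_apply, LinearMap.smulRight_apply]
    exact hκ a
  have hΔκ : ∀ a : A, Δ (applySnd k (G.φ ∘ₗ Sl) (Δ a))
      = (applySnd k (G.φ ∘ₗ Sl) (Δ a)) ⊗ₜ[k] g := by
    intro a
    have e1 : Δ (applySnd k (G.φ ∘ₗ Sl) (Δ a))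
        = applySnd k (G.φ ∘ₗ Sl) ((Δ).rTensor A (Δ a)) :=
      (applySnd_rTensor _ _ _).symm
    have e2 : (Δ).rTensor A (Δ a)
        = (TensorProduct.assoc k A A A).symm ((Δ).lTensor A (Δ a)) :=
      (Coalgebra.coassoc_symm_apply a).symm
    rw [e1, e2, applySnd_assoc_symm, ← LinearMap.comp_apply, ← LinearMap.lTensor_comp,
      hκmap, lTensor_smulRight]
  have hΔg : Δ g = g ⊗ₜ[k] g := by
    have := hΔκ a₀
    rw [hκ a₀, ha₀, one_smul] at this
    exact this
  have hεg : ε g = 1 := by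
    have hsw := applyFst_applySnd_swap (k := k) ε (G.φ ∘ₗ Sl) (Δ a₀)
    rw [applyFst_counit_comul, hκ a₀, ha₀, one_smul] at hsw
    exact hsw.symm
  refine ⟨hΔg, ?_, ?_⟩
  · have := HopfAlgebra.mul_antipode_rTensor_comul_apply (R := k) g
    rw [hΔg, LinearMap.rTensor_tmul, LinearMap.mul'_apply, hεg, map_one] at this
    exact this
  · have := HopfAlgebra.mul_antipode_lTensor_comul_apply (R := k) g
    rw [hΔg, LinearMap.lTensor_tmul, LinearMap.mul'_apply, hεg, map_one] at this
    exact this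

end FinalLemmas2

theorem galois_object_invariant_functional_unique
    {k : Type*} [Field k] {A X : Type*} [Ring A] [HopfAlgebra k A]
    [Ring X] [Algebra k X] [Nontrivial X]
    (G : GaloisContext k A X)
    (ψ₁ ψ₂ : X →ₗ[k] k) (hψ₁_ne : ψ₁ ≠ 0) (hψ₂_ne : ψ₂ ≠ 0)
    (hψ₁ : ∀ x : X, applyFst k ψ₁ (G.α x) = ψ₁ x • (1 : A))
    (hψ₂ : ∀ x : X, applyFst k ψ₂ (G.α x) = ψ₂ x • (1 : A)) :
    ∃ c : k, ψ₁ = c • ψ₂ := by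
  classical
  obtain ⟨z₂, hz₂⟩ : ∃ z : X, ψ₂ z ≠ 0 := by
    by_contra hc
    push_neg at hc
    exact hψ₂_ne (LinearMap.ext fun z => by simp [hc z])
  obtain ⟨z₁, hz₁⟩ : ∃ z : X, ψ₁ z ≠ 0 := by
    by_contra hc
    push_neg at hc
    exact hψ₁_ne (LinearMap.ext fun z => by simp [hc z])
  obtain ⟨x₁, hx₁, -⟩ := classification G (applySnd k ψ₁ ∘ₗ G.β) (gamma_inv G ψ₁ hψ₁)
  obtain ⟨x₂, hx₂, hg'⟩ := classification G (applySnd k ψ₂ ∘ₗ G.β) (gamma_inv G ψ₂ hψ₂)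
  have hs₁ := scalar_identity G ψ₁ x₁ (fun c => hx₁ c)
  have hs₂ := scalar_identity G ψ₂ x₂ (fun c => hx₂ c)
  have hone : (1 : X) ≠ 0 := one_ne_zero
  -- x₂ ≠ 0
  have hx₂0 : x₂ ≠ 0 := by
    intro h0
    have h := hs₂ z₂
    rw [h0, mul_zero] at h
    rcases smul_zero_cases (k := k) (M := X) h with h' | h'
    exacts [hz₂ h', hone h']
  obtain ⟨g', hκ'⟩ := hg' hx₂0
  have hκ := kappa_identity G g' hκ'
  set g : A := (LinearEquiv.ofBijective _ G.antipode_bijective).symm g' with hgdef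
  -- a normalized element for ψ₀ = φ ∘ S
  obtain ⟨a', ha'⟩ : ∃ a : A, (G.φ ∘ₗ HopfAlgebra.antipode (R := k)) a ≠ 0 := by
    by_contra hc
    push_neg at hc
    have hzero : (G.φ ∘ₗ HopfAlgebra.antipode (R := k) : A →ₗ[k] k) = 0 :=
      LinearMap.ext fun a => by simpa using hc a
    have h := hs₂ z₂
    rw [hzero] at h
    have h0 : applySnd k (0 : A →ₗ[k] k) (G.α z₂) = 0 := by
      simp [applySnd]
    rw [h0, zero_mul] at h
    rcases smul_zero_cases (k := k) (M := X) h with h' | h'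
    exacts [hz₂ h', hone h']
  set a₀ : A := ((G.φ ∘ₗ HopfAlgebra.antipode (R := k)) a')⁻¹ • a' with ha₀def
  have ha₀ : (G.φ ∘ₗ HopfAlgebra.antipode (R := k)) a₀ = 1 := by
    rw [ha₀def, map_smul, smul_eq_mul, inv_mul_cancel₀ ha']
  obtain ⟨hΔg, hSg, hgS⟩ := grouplike G g hκ a₀ ha₀
  have hαq := alpha_q G g hκ
  -- the distinguished element u₀
  set u₀ : X ⊗[k] X := G.V.symm ((1:X) ⊗ₜ[k] a₀) with hu₀def
  have hTu₀ : applySnd k (G.φ ∘ₗ HopfAlgebra.antipode (R := k))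
      (galoisV k A X G.α u₀) = 1 := by
    have h : galoisV k A X G.α u₀ = (1:X) ⊗ₜ[k] a₀ := by
      rw [hu₀def, ← V_apply]
      exact G.V.apply_symm_apply _
    rw [h, applySnd_tmul, ha₀, one_smul]
  have lemA : ∀ u : X ⊗[k] X, applySnd k ψ₂ u
      = (applySnd k (G.φ ∘ₗ HopfAlgebra.antipode (R := k)) (galoisV k A X G.α u)) * x₂ := by
    intro u
    induction u using TensorProduct.induction_on with
    | zero => simp
    | tmul y z =>
        rw [applySnd_tmul, galoisV_tmul, applySnd_one_tmul_mul, mul_assoc, ← hs₂ z,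
          mul_smul_comm, mul_one]
    | add u v hu hv => rw [map_add, map_add, map_add, hu, hv, add_mul]
  have hx₂u : applySnd k ψ₂ u₀ = x₂ := by
    rw [lemA u₀, hTu₀, one_mul]
  have lemB : ∀ u : X ⊗[k] X,
      ((applySnd k (G.φ ∘ₗ HopfAlgebra.antipode (R := k)) (galoisV k A X G.α u)) ⊗ₜ[k] g)
        * (G.α x₂) = (applySnd k ψ₂ u) ⊗ₜ[k] (1:A) := by
    intro u
    induction u using TensorProduct.induction_on with
    | zero => simp
    | tmul y z =>
        rw [galoisV_tmul, applySnd_one_tmul_mul, applySnd_tmul]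
        have step1 : ((y * applySnd k (G.φ ∘ₗ HopfAlgebra.antipode (R := k)) (G.α z)) ⊗ₜ[k] g)
            = (y ⊗ₜ[k] (1:A)) *
              ((applySnd k (G.φ ∘ₗ HopfAlgebra.antipode (R := k)) (G.α z)) ⊗ₜ[k] g) := by
          rw [Algebra.TensorProduct.tmul_mul_tmul, one_mul]
        rw [step1, mul_assoc, ← hαq z, ← map_mul, ← hs₂ z, map_smul, map_one,
          mul_smul_comm, mul_one, smul_tmul']
    | add u v hu hv =>
        rw [map_add, map_add, map_add, add_tmul, add_mul, hu, hv, add_tmul]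
  have hBu : ((1:X) ⊗ₜ[k] g) * (G.α x₂) = x₂ ⊗ₜ[k] (1:A) := by
    have := lemB u₀
    rwa [hTu₀, hx₂u] at this
  have hαx₂ : G.α x₂ = x₂ ⊗ₜ[k] (HopfAlgebra.antipode (R := k) g) := by
    have h := congrArg (fun w => ((1:X) ⊗ₜ[k] (HopfAlgebra.antipode (R := k) g)) * w) hBu
    rw [← mul_assoc, Algebra.TensorProduct.tmul_mul_tmul, one_mul, hSg,
      ← Algebra.TensorProduct.one_def, one_mul, Algebra.TensorProduct.tmul_mul_tmul,
      one_mul, mul_one] at h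
    exact h
  -- the left inverse l of x₂
  set l : X := (ψ₂ z₂)⁻¹ •
    applySnd k (G.φ ∘ₗ HopfAlgebra.antipode (R := k)) (G.α z₂) with hldef
  have hlx₂ : l * x₂ = 1 := by
    rw [hldef, smul_mul_assoc, ← hs₂ z₂, smul_smul, inv_mul_cancel₀ hz₂, one_smul]
  have hαl : G.α l = l ⊗ₜ[k] g := by
    rw [hldef, map_smul, hαq z₂, smul_tmul']
  have hp : G.α (x₂ * l) = (x₂ * l) ⊗ₜ[k] (1:A) := by
    rw [map_mul, hαx₂, hαl, Algebra.TensorProduct.tmul_mul_tmul, hSg]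
  obtain ⟨e, he⟩ := G.coinv_trivial (x₂ * l) hp
  have he1 : e = 1 := by
    have h1 : (x₂ * l) * x₂ = x₂ := by rw [mul_assoc, hlx₂, mul_one]
    rw [he, smul_mul_assoc, one_mul] at h1
    have h2 : (e - 1) • x₂ = 0 := by
      rw [sub_smul, one_smul, h1, sub_self]
    rcases smul_zero_cases (k := k) (M := X) h2 with h' | h'
    · exact sub_eq_zero.mp h'
    · exact absurd h' hx₂0
  have hx₂l : x₂ * l = 1 := by rw [he, he1, one_smul]
  have hqz : ∀ z : X, applySnd k (G.φ ∘ₗ HopfAlgebra.antipode (R := k)) (G.α z)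
      = ψ₂ z • l := by
    intro z
    calc applySnd k (G.φ ∘ₗ HopfAlgebra.antipode (R := k)) (G.α z)
        = (applySnd k (G.φ ∘ₗ HopfAlgebra.antipode (R := k)) (G.α z)) * (x₂ * l) := by
          rw [hx₂l, mul_one]
      _ = ((applySnd k (G.φ ∘ₗ HopfAlgebra.antipode (R := k)) (G.α z)) * x₂) * l := by
          rw [mul_assoc]
      _ = (ψ₂ z • (1:X)) * l := by rw [← hs₂ z]
      _ = ψ₂ z • l := by rw [smul_mul_assoc, one_mul]
  have key1 : ∀ z : X, ψ₁ z • (1:X) = ψ₂ z • (l * x₁) := by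
    intro z
    rw [hs₁ z, hqz z, smul_mul_assoc]
  have hψ₂z₁ : ψ₂ z₁ ≠ 0 := by
    intro h0
    have h := key1 z₁
    rw [h0, zero_smul] at h
    rcases smul_zero_cases (k := k) (M := X) h with h' | h'
    exacts [hz₁ h', hone h']
  refine ⟨(ψ₂ z₁)⁻¹ * ψ₁ z₁, ?_⟩
  have hlx₁ : l * x₁ = ((ψ₂ z₁)⁻¹ * ψ₁ z₁) • (1:X) := by
    have h := key1 z₁
    have h2 := congrArg (fun w => (ψ₂ z₁)⁻¹ • w) h
    rw [smul_smul, smul_smul, inv_mul_cancel₀ hψ₂z₁, one_smul] at h2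
    exact h2.symm
  ext z
  have h := key1 z
  rw [hlx₁, smul_smul] at h
  have h2 : (ψ₁ z - ψ₂ z * ((ψ₂ z₁)⁻¹ * ψ₁ z₁)) • (1:X) = 0 := by
    rw [sub_smul, h, sub_self]
  rcases smul_zero_cases (k := k) (M := X) h2 with h' | h'
  · have h3 : ψ₁ z = ψ₂ z * ((ψ₂ z₁)⁻¹ * ψ₁ z₁) := sub_eq_zero.mp h'
    rw [h3]
    simp [LinearMap.smul_apply, smul_eq_mul]
    ring
  · exact absurd h' hone
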